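/- Let ε>0, c∈ℝ, and let a,b:[1-ε,1]→ℝ be continuous with a(1)>0. Suppose x:[1-ε,1]→ℝ is continuous, continuously differentiable on [1-ε,1), satisfies x'(t) = a(t)·(x(t)-c)/(1-t) + b(t) for all t∈[1-ε,1), and x(1)=c. Then x is continuously differentiable on [1-ε,1] with x'(1) = b(1)/(1+a(1)). -/

import Mathlib

open Set Topology Filter

lemma first_crossing {ψ : ℝ → ℝ} {t0 t1 : ℝ}
    (hc : ContinuousOn ψ (Icc t0 t1))
    (hd : ∀ t ∈ Ico t0 t1, ψ t = 0 → ∃ d, 0 < d ∧ HasDerivAt ψ d t)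
    (h0 : 0 ≤ ψ t0) : ∀ t ∈ Icc t0 t1, 0 ≤ ψ t := by
  by_contra hcon
  push_neg at hcon
  obtain ⟨u, hu, hψu⟩ := hcon
  have ht0u : t0 ≤ u := hu.1
  set A := Icc t0 u ∩ ψ ⁻¹' (Ici 0) with hA
  have hA0 : t0 ∈ A := ⟨⟨le_refl _, ht0u⟩, h0⟩
  have hAne : A.Nonempty := ⟨t0, hA0⟩
  have hAbdd : BddAbove A := ⟨u, fun t ht => ht.1.2⟩
  have hIccsub : Icc t0 u ⊆ Icc t0 t1 := Icc_subset_Icc le_rfl hu.2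
  have hA_closed : IsClosed A :=
    (hc.mono hIccsub).preimage_isClosed_of_isClosed isClosed_Icc isClosed_Ici
  set s := sSup A with hs
  have hsA : s ∈ A := hA_closed.csSup_mem hAne hAbdd
  have hψs0 : 0 ≤ ψ s := hsA.2
  have hsu : s ≤ u := hsA.1.2
  have hslt : s < u := hsu.lt_of_ne (fun h => absurd (h ▸ hψs0) (not_le.2 hψu))
  have hneg : ∀ t ∈ Ioc s u, ψ t < 0 := by
    intro t ht
    by_contra hge
    push_neg at hge
    have : t ∈ A := ⟨⟨hsA.1.1.trans ht.1.le, ht.2⟩, hge⟩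
    exact absurd (le_csSup hAbdd this) (not_le.2 ht.1)
  have hψsle : ψ s ≤ 0 := by
    have hcs : ContinuousWithinAt ψ (Icc t0 t1) s := hc s (hIccsub hsA.1)
    have hsub : Ioc s u ⊆ Icc t0 t1 := fun t ht =>
      ⟨hsA.1.1.trans ht.1.le, ht.2.trans hu.2⟩
    have htend : Filter.Tendsto ψ (𝓝[Ioc s u] s) (𝓝 (ψ s)) :=
      hcs.mono hsub
    have hne : (𝓝[Ioc s u] s).NeBot :=
      (left_nhdsWithin_Ioo_neBot hslt).mono (nhdsWithin_mono _ Ioo_subset_Ioc_self)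
    exact le_of_tendsto htend (Filter.eventually_of_mem self_mem_nhdsWithin
      fun t ht => (hneg t ht).le)
  have hψseq : ψ s = 0 := le_antisymm hψsle hψs0
  obtain ⟨d, hd0, hder⟩ := hd s ⟨hsA.1.1, hslt.trans_le hu.2⟩ hψseq
  have hslope : Filter.Tendsto (slope ψ s) (𝓝[>] s) (𝓝 d) :=
    (hasDerivAt_iff_tendsto_slope.1 hder).mono_left
      (nhdsWithin_mono _ fun t ht => ne_of_gt ht)
  have h1 : ∀ᶠ t in 𝓝[>] s, 0 < slope ψ s t :=
    hslope.eventually (eventually_gt_nhds hd0)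
  have h2 : ∀ᶠ t in 𝓝[>] s, t ∈ Ioc s u :=
    Filter.eventually_of_mem (inter_mem self_mem_nhdsWithin
      (nhdsWithin_le_nhds (Iio_mem_nhds hslt))) (fun t ht => ⟨ht.1, ht.2.le⟩)
  have : (𝓝[>] s).NeBot := nhdsGT_neBot_of_exists_gt ⟨u, hslt⟩
  obtain ⟨t, ht1, ht2⟩ := (h1.and h2).exists
  have : 0 < ψ t := by
    have := ht1
    rw [slope_def_field] at this
    have hts : 0 < t - s := sub_pos.2 ht2.1
    have := mul_pos this hts
    rw [div_mul_cancel₀] at this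
    · linarith [hψseq]
    · exact ne_of_gt hts
  exact absurd this (not_lt.2 (hneg t ht2).le)


/-- Singular ODE regularity at t = 1: if x'(t) = a(t)(x(t)-c)/(1-t) + b(t) on [1-ε,1),
x continuous on [1-ε,1] with x(1) = c, a(1) > 0, then x is C¹ on [1-ε,1] with
x'(1) = b(1)/(1+a(1)). -/
theorem stmt1 (ε c : ℝ) (hε : 0 < ε) (a b x x' : ℝ → ℝ)
    (ha : ContinuousOn a (Icc (1 - ε) 1)) (hb : ContinuousOn b (Icc (1 - ε) 1))
    (ha1 : 0 < a 1)
    (hx : ContinuousOn x (Icc (1 - ε) 1))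
    (hderiv : ∀ t ∈ Ico (1 - ε) (1:ℝ), HasDerivAt x (x' t) t)
    (hx'cont : ContinuousOn x' (Ico (1 - ε) 1))
    (hode : ∀ t ∈ Ico (1 - ε) (1:ℝ), x' t = a t * (x t - c) / (1 - t) + b t)
    (hx1 : x 1 = c) :
    ∃ X' : ℝ → ℝ, ContinuousOn X' (Icc (1 - ε) 1) ∧
      (∀ t ∈ Icc (1 - ε) (1:ℝ), HasDerivWithinAt x (X' t) (Icc (1 - ε) 1) t) ∧
      (∀ t ∈ Ico (1 - ε) (1:ℝ), X' t = x' t) ∧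
      X' 1 = b 1 / (1 + a 1) := by
  have h1mem : (1:ℝ) ∈ Icc (1-ε) 1 := ⟨by linarith, le_rfl⟩
  have h1a : (0:ℝ) < 1 + a 1 := by linarith
  set L : ℝ := -(b 1) / (1 + a 1) with hL
  set h : ℝ → ℝ := fun t => x t - c - L * (1 - t) with hh
  have hh1 : h 1 = 0 := by simp [hh, hx1]
  set g : ℝ → ℝ := fun t => (a t + 1) * L + b t with hg
  have hg1 : g 1 = 0 := by
    rw [hg]; simp only; rw [hL]; field_simp; ring
  have hhc : ContinuousOn h (Icc (1-ε) 1) :=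
    (hx.sub continuousOn_const).sub
      (continuousOn_const.mul (continuousOn_const.sub continuousOn_id))
  have hgc : ContinuousOn g (Icc (1-ε) 1) :=
    ((ha.add continuousOn_const).mul continuousOn_const).add hb
  have hhderiv : ∀ t ∈ Ico (1-ε) (1:ℝ), HasDerivAt h (x' t + L) t := by
    intro t ht
    have h1 : HasDerivAt (fun s : ℝ => L * (1 - s)) (-L) t := by
      simpa using ((hasDerivAt_id t).const_sub 1).const_mul L
    have h2 := ((hderiv t ht).sub_const c).sub h1
    rw [sub_neg_eq_add] at h2
    exact h2
  have hident : ∀ t ∈ Ico (1-ε) (1:ℝ), x' t + L = a t * (h t / (1 - t)) + g t := by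
    intro t ht
    have h1t : (0:ℝ) < 1 - t := by have := ht.2; linarith
    rw [hode t ht, hh, hg]
    field_simp
    ring
  -- key estimate
  have key : ∀ δ : ℝ, 0 < δ → ∀ᶠ t in 𝓝[Ico (1-ε) 1] 1, |h t| ≤ δ * (1 - t) := by
    intro δ hδ
    have haev : ∀ᶠ t in 𝓝[Icc (1-ε) 1] 1, a 1 / 2 < a t :=
      (ha 1 h1mem).eventually (eventually_gt_nhds (half_lt_self ha1))
    have hgev : ∀ᶠ t in 𝓝[Icc (1-ε) 1] 1, |g t| < δ * a 1 / 4 := by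
      have ht : Filter.Tendsto g (𝓝[Icc (1-ε) 1] 1) (𝓝 0) := by
        have := hgc 1 h1mem
        rwa [ContinuousWithinAt, hg1] at this
      have := Metric.tendsto_nhds.1 ht (δ * a 1 / 4) (by positivity)
      simpa [Real.dist_eq] using this
    obtain ⟨η, hη, hηP⟩ := Metric.mem_nhdsWithin_iff.1 (haev.and hgev)
    have hwin : ∀ t0 ∈ Ico (1-ε) (1:ℝ), dist t0 1 < η →
        ∀ t ∈ Icc t0 1, a 1 / 2 < a t ∧ |g t| < δ * a 1 / 4 := by
      intro t0 ht0 hd0 t ht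
      refine hηP ⟨?_, ⟨ht0.1.trans ht.1, ht.2⟩⟩
      rw [Metric.mem_ball, Real.dist_eq, abs_sub_comm, abs_of_nonneg (by linarith [ht.2])]
      rw [Real.dist_eq, abs_sub_comm, abs_of_nonneg (by linarith [ht0.2.le])] at hd0
      linarith [ht.1]
    have hmem : Ico (1-ε) (1:ℝ) ∩ Metric.ball 1 η ∈ 𝓝[Ico (1-ε) 1] (1:ℝ) :=
      inter_mem self_mem_nhdsWithin (nhdsWithin_le_nhds (Metric.ball_mem_nhds 1 hη))
    refine Filter.eventually_of_mem hmem ?_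
    rintro t0 ⟨ht0, hball⟩
    have hd0 : dist t0 1 < η := Metric.mem_ball.1 hball
    have h1t0 : (0:ℝ) < 1 - t0 := by have := ht0.2; linarith
    rw [abs_le]
    constructor
    · -- lower bound: -δ(1-t0) ≤ h t0
      by_contra hcb
      push_neg at hcb
      have hmono : ∀ t ∈ Ico t0 (1:ℝ), h t ≤ h t0 := by
        intro t ht
        have hsub : Icc t0 t ⊆ Icc (1-ε) 1 := Icc_subset_Icc ht0.1 ht.2.le
        have := first_crossing (ψ := fun s => h t0 - h s) (t0 := t0) (t1 := t)
          (continuousOn_const.sub (hhc.mono hsub))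
          (by
            intro s hsm hzero
            have hst : s ∈ Ico (1-ε) (1:ℝ) := ⟨ht0.1.trans hsm.1, hsm.2.trans_le ht.2.le⟩
            have h1s : (0:ℝ) < 1 - s := by have := hst.2; linarith
            have hseq : h s = h t0 := by linarith [sub_eq_zero.1 hzero]
            have hwins := hwin t0 ht0 hd0 s ⟨hsm.1, hst.2.le⟩
            have hrs : h s / (1 - s) < -δ := by
              rw [div_lt_iff₀ h1s, hseq]
              nlinarith [hcb, hsm.1, hδ]
            refine ⟨-(x' s + L), ?_, ?_⟩
            · rw [hident s hst]
              have hgs := abs_lt.1 hwins.2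
              nlinarith [hwins.1, hrs, hgs.1, hgs.2, hδ, ha1]
            · simpa using (hhderiv s hst).const_sub (h t0)
          ) (by simp)
        have h2 := this t ⟨ht.1, le_refl t⟩
        linarith
      have hlim : Filter.Tendsto h (𝓝[Ico t0 1] 1) (𝓝 (h 1)) :=
        (hhc 1 h1mem).mono (fun _ htt => ⟨ht0.1.trans htt.1, htt.2.le⟩)
      have hne : (𝓝[Ico t0 1] (1:ℝ)).NeBot := right_nhdsWithin_Ico_neBot ht0.2
      have : h 1 ≤ h t0 := le_of_tendsto hlim
        (Filter.eventually_of_mem self_mem_nhdsWithin hmono)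
      rw [hh1] at this
      nlinarith [hcb]
    · -- upper bound: h t0 ≤ δ(1-t0)
      by_contra hcb
      push_neg at hcb
      have hmono : ∀ t ∈ Ico t0 (1:ℝ), h t0 ≤ h t := by
        intro t ht
        have hsub : Icc t0 t ⊆ Icc (1-ε) 1 := Icc_subset_Icc ht0.1 ht.2.le
        have := first_crossing (ψ := fun s => h s - h t0) (t0 := t0) (t1 := t)
          ((hhc.mono hsub).sub continuousOn_const)
          (by
            intro s hsm hzero
            have hst : s ∈ Ico (1-ε) (1:ℝ) := ⟨ht0.1.trans hsm.1, hsm.2.trans_le ht.2.le⟩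
            have h1s : (0:ℝ) < 1 - s := by have := hst.2; linarith
            have hseq : h s = h t0 := sub_eq_zero.1 hzero
            have hwins := hwin t0 ht0 hd0 s ⟨hsm.1, hst.2.le⟩
            have hrs : δ < h s / (1 - s) := by
              rw [lt_div_iff₀ h1s, hseq]
              nlinarith [hcb, hsm.1, hδ]
            refine ⟨x' s + L, ?_, ?_⟩
            · rw [hident s hst]
              have hgs := abs_lt.1 hwins.2
              nlinarith [hwins.1, hrs, hgs.1, hgs.2, hδ, ha1]
            · simpa using (hhderiv s hst).sub_const (h t0)
          ) (by simp)
        have h2 := this t ⟨ht.1, le_refl t⟩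
        linarith
      have hlim : Filter.Tendsto h (𝓝[Ico t0 1] 1) (𝓝 (h 1)) :=
        (hhc 1 h1mem).mono (fun _ htt => ⟨ht0.1.trans htt.1, htt.2.le⟩)
      have hne : (𝓝[Ico t0 1] (1:ℝ)).NeBot := right_nhdsWithin_Ico_neBot ht0.2
      have : h t0 ≤ h 1 := ge_of_tendsto hlim
        (Filter.eventually_of_mem self_mem_nhdsWithin hmono)
      rw [hh1] at this
      nlinarith [hcb]
  -- limit of the quotient
  have hqtend : Filter.Tendsto (fun t => (x t - c) / (1 - t)) (𝓝[Ico (1-ε) 1] 1) (𝓝 L) := by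
    rw [Metric.tendsto_nhds]
    intro δ hδ
    filter_upwards [key (δ/2) (by linarith), self_mem_nhdsWithin] with t hkey ht
    have h1t : (0:ℝ) < 1 - t := by have := ht.2; linarith
    rw [Real.dist_eq]
    have heq : (x t - c) / (1 - t) - L = h t / (1 - t) := by
      rw [hh]; field_simp
    rw [heq, abs_div, abs_of_pos h1t, div_lt_iff₀ h1t]
    calc |h t| ≤ δ/2 * (1-t) := hkey
      _ < δ * (1-t) := by nlinarith
  have hval : a 1 * L + b 1 = b 1 / (1 + a 1) := by
    rw [hL]; field_simp; ring
  -- derivative at 1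
  have hD1 : HasDerivWithinAt x (b 1 / (1 + a 1)) (Icc (1-ε) 1) 1 := by
    rw [hasDerivWithinAt_iff_tendsto_slope, Icc_sdiff_right]
    have hLeq : -L = b 1 / (1 + a 1) := by rw [hL]; ring
    rw [← hLeq]
    refine (hqtend.neg).congr' ?_
    filter_upwards [self_mem_nhdsWithin] with t ht
    have h1t : (1:ℝ) - t ≠ 0 := by have := ht.2; intro hcc; linarith
    rw [slope_def_field, hx1, show t - 1 = -(1 - t) by ring, div_neg]
  -- the extended derivative
  refine ⟨fun t => if t = 1 then b 1 / (1 + a 1) else x' t, ?_, ?_, ?_, if_pos rfl⟩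
  · -- continuity
    intro t ht
    rcases eq_or_lt_of_le ht.2 with rfl | htlt
    · rw [← continuousWithinAt_diff_self, Icc_sdiff_right]
      have hx'eq : ∀ s ∈ Ico (1-ε) (1:ℝ),
          (if s = 1 then b 1 / (1 + a 1) else x' s) = a s * ((x s - c) / (1 - s)) + b s := by
        intro s hs
        rw [if_neg (ne_of_lt hs.2), hode s hs, mul_div_assoc]
      have haT : Filter.Tendsto a (𝓝[Ico (1-ε) 1] 1) (𝓝 (a 1)) :=
        (ha 1 h1mem).mono Ico_subset_Icc_self
      have hbT : Filter.Tendsto b (𝓝[Ico (1-ε) 1] 1) (𝓝 (b 1)) :=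
        (hb 1 h1mem).mono Ico_subset_Icc_self
      have htend : Filter.Tendsto (fun s => a s * ((x s - c) / (1 - s)) + b s)
          (𝓝[Ico (1-ε) 1] 1) (𝓝 (a 1 * L + b 1)) := (haT.mul hqtend).add hbT
      rw [hval] at htend
      have : ContinuousWithinAt (fun s => if s = 1 then b 1 / (1 + a 1) else x' s)
          (Ico (1-ε) 1) 1 := by
        rw [ContinuousWithinAt, if_pos rfl]
        exact htend.congr' (Filter.eventually_of_mem self_mem_nhdsWithin
          fun s hs => (hx'eq s hs).symm)
      exact this
    · have hrw : 𝓝[Icc (1-ε) 1] t = 𝓝[Ico (1-ε) 1] t := by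
        rw [nhdsWithin_restrict' _ (Iio_mem_nhds htlt)]
        congr 1
        ext s
        constructor
        · rintro ⟨⟨hs1, _⟩, hs3⟩; exact ⟨hs1, hs3⟩
        · rintro ⟨hs1, hs2⟩; exact ⟨⟨hs1, hs2.le⟩, hs2⟩
      have hcx : ContinuousWithinAt x' (Ico (1-ε) 1) t := hx'cont t ⟨ht.1, htlt⟩
      have hcX : ContinuousWithinAt (fun s => if s = 1 then b 1 / (1 + a 1) else x' s)
          (Ico (1-ε) 1) t :=
        hcx.congr (fun s hs => if_neg (ne_of_lt hs.2)) (if_neg (ne_of_lt htlt))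
      show Filter.Tendsto _ (𝓝[Icc (1-ε) 1] t) _
      rw [hrw]
      exact hcX
  · intro t ht
    rcases eq_or_lt_of_le ht.2 with rfl | htlt
    · simp only [if_pos rfl]
      exact hD1
    · simp only [if_neg (ne_of_lt htlt)]
      exact (hderiv t ⟨ht.1, htlt⟩).hasDerivWithinAt
  · intro t ht
    exact if_neg (ne_of_lt ht.2)
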